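/- For all α > 0, β > 0, 0 < a < 1 and u ∈ ℝ, the identity ((β - i a u)/(β - i u))^α = ∑_{k=0}^∞ C(α+k-1, k) a^α (1-a)^k (β/(β - i a u))^k holds; that is, the characteristic function of the a-remainder of the Gamma(α, β) law is an infinite Polya(α, 1-a)-weighted mixture of the characteristic functions of Erlang laws Erl_k(β/a). -/

import Mathlib

open Complex

/-- Generalized binomial coefficient `C(α+k-1, k) = α(α+1)⋯(α+k-1)/k!`. -/
noncomputable def negBinomCoeff (α : ℝ) (k : ℕ) : ℝ :=
  (∏ j ∈ Finset.range k, (α + j)) / (Nat.factorial k : ℝ)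

lemma aux_iteratedDeriv (s : ℂ) : ∀ (n : ℕ) (z : ℂ), 1 - z ∈ Complex.slitPlane →
    iteratedDeriv n (fun w : ℂ => (1 - w) ^ (-s)) z
      = (∏ j ∈ Finset.range n, (s + j)) * (1 - z) ^ (-(s + n)) := by
  intro n
  induction n with
  | zero => intro z hz; simp
  | succ n ih =>
    intro z hz
    have hopen : IsOpen {w : ℂ | 1 - w ∈ Complex.slitPlane} :=
      Complex.isOpen_slitPlane.preimage (continuous_const.sub continuous_id)
    have hev : (iteratedDeriv n (fun w : ℂ => (1 - w) ^ (-s)))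
        =ᶠ[nhds z] (fun w => (∏ j ∈ Finset.range n, (s + j)) * (1 - w) ^ (-(s + n))) := by
      filter_upwards [hopen.mem_nhds hz] with w hw using ih w hw
    have hd : HasDerivAt (fun w : ℂ => (1 - w) ^ (-(s + n)))
        ((-(s + n)) * (1 - z) ^ (-(s + n) - 1) * (-1)) z := by
      exact (HasDerivAt.const_sub 1 (hasDerivAt_id z)).cpow_const hz
    rw [iteratedDeriv_succ, hev.deriv_eq, deriv_const_mul _ hd.differentiableAt,
      hd.deriv, Finset.prod_range_succ]
    have h1 : 1 - z ≠ 0 := Complex.slitPlane_ne_zero hz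
    have : (1 - z) ^ (-(s + n) - 1) = (1 - z) ^ (-(s + (n + 1))) := by
      congr 1
      push_cast
      ring
    rw [this]
    push_cast
    ring

lemma aux_binomial (s : ℂ) {x : ℂ} (hx : ‖x‖ < 1) :
    HasSum (fun n : ℕ => ((∏ j ∈ Finset.range n, (s + j)) / (Nat.factorial n : ℂ)) * x ^ n)
      ((1 - x) ^ (-s)) := by
  have hmem : ∀ z : ℂ, z ∈ Metric.ball (0 : ℂ) 1 → 1 - z ∈ Complex.slitPlane := by
    intro z hz
    rw [Metric.mem_ball, dist_zero_right] at hz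
    refine Complex.mem_slitPlane_iff.2 (Or.inl ?_)
    have : |z.re| < 1 := lt_of_le_of_lt (Complex.abs_re_le_norm z) hz
    simp only [Complex.sub_re, Complex.one_re]
    linarith [abs_lt.mp this]
  have hf : DifferentiableOn ℂ (fun w : ℂ => (1 - w) ^ (-s)) (Metric.ball (0 : ℂ) 1) := by
    intro z hz
    exact (((hasDerivAt_id z).const_sub 1).cpow_const
      (hmem z hz)).differentiableAt.differentiableWithinAt
  have hxball : x ∈ Metric.ball (0 : ℂ) 1 := by
    rw [Metric.mem_ball, dist_zero_right]; exact hx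
  have H := Complex.hasSum_taylorSeries_on_ball hf hxball
  have h0 : (0 : ℂ) ∈ Metric.ball (0 : ℂ) 1 := by simp
  convert H using 2 with n
  · rfl
  rw [aux_iteratedDeriv s n 0 (hmem 0 h0)]
  simp [smul_eq_mul]
  ring

/-- The characteristic function of the a-remainder of Gamma(α, β) is an infinite
Polya(α, 1-a)-weighted mixture of the characteristic functions of Erlang laws
`Erl_k(β/a)`:
`((β - iau)/(β - iu))^α = ∑_k C(α+k-1,k) a^α (1-a)^k (β/(β - iau))^k`. -/
theorem arem_gamma_polya_mixture
    (α β a : ℝ) (hα : 0 < α) (hβ : 0 < β) (ha0 : 0 < a) (ha1 : a < 1) (u : ℝ) :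
    HasSum
      (fun k : ℕ =>
        ((negBinomCoeff α k * a ^ α * (1 - a) ^ k : ℝ) : ℂ) *
          ((β : ℂ) / ((β : ℂ) - Complex.I * a * u)) ^ k)
      ((((β : ℂ) - Complex.I * a * u) / ((β : ℂ) - Complex.I * u)) ^ (α : ℂ)) := by
  set d : ℂ := (β : ℂ) - Complex.I * a * u with hd
  set e : ℂ := (β : ℂ) - Complex.I * u with he
  have hdre : d.re = β := by simp [hd]
  have hdne : d ≠ 0 := by
    intro h; rw [h] at hdre; simp at hdre; linarith
  have here : e.re = β := by simp [he]
  have hene : e ≠ 0 := by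
    intro h; rw [h] at here; simp at here; linarith
  set x : ℂ := ((1 - a : ℝ) : ℂ) * ((β : ℂ) / d) with hxdef
  have hnd : β ≤ ‖d‖ := by
    have := Complex.abs_re_le_norm d
    rw [hdre] at this
    exact le_trans (le_abs_self β) this
  have hx : ‖x‖ < 1 := by
    rw [hxdef]
    have h1 : ‖((1 - a : ℝ) : ℂ)‖ = 1 - a := by
      rw [Complex.norm_real, Real.norm_eq_abs, abs_of_pos (by linarith)]
    have h2 : ‖(β : ℂ) / d‖ ≤ 1 := by
      rw [norm_div, div_le_one (by linarith)]
      rw [Complex.norm_real, Real.norm_eq_abs, abs_of_pos hβ]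
      exact hnd
    calc ‖((1 - a : ℝ) : ℂ) * ((β : ℂ) / d)‖ = (1 - a) * ‖(β : ℂ) / d‖ := by
          rw [norm_mul, h1]
      _ ≤ (1 - a) * 1 := by
          exact mul_le_mul_of_nonneg_left h2 (by linarith)
      _ < 1 := by linarith
  -- 1 - x = a * e / d
  have hkey : 1 - x = ((a : ℂ)) * (e / d) := by
    rw [hxdef]
    field_simp
    rw [hd, he]
    push_cast
    ring
  -- e/d is in the slit plane (positive real part)
  have hed_re : (e / d).re = (β ^ 2 + a * u ^ 2) / (Complex.normSq d) := by
    rw [Complex.div_re, hdre, here]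
    have h1 : e.im = -u := by simp [he]
    have h2 : d.im = -(a * u) := by simp [hd]
    rw [h1, h2]
    ring
  have hed_pos : 0 < (e / d).re := by
    rw [hed_re]
    apply div_pos
    · have : 0 < β ^ 2 := pow_pos hβ 2
      nlinarith [sq_nonneg u]
    · exact Complex.normSq_pos.2 hdne
  have hed_slit : e / d ∈ Complex.slitPlane := Complex.mem_slitPlane_iff.2 (Or.inl hed_pos)
  have hedne : e / d ≠ 0 := div_ne_zero hene hdne
  -- value identity : (1-x)^(-α) * a^α = (d/e)^α
  have hval : (((a : ℝ) : ℂ) ^ (α : ℂ)) * ((1 - x) ^ (-(α : ℂ))) = (d / e) ^ (α : ℂ) := by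
    rw [hkey]
    have hane : ((a : ℝ) : ℂ) ≠ 0 := by
      simp only [ne_eq, Complex.ofReal_eq_zero]; linarith
    have hlogmul : Complex.log (((a : ℝ) : ℂ) * (e / d)) =
        ((Real.log a : ℝ) : ℂ) + Complex.log (e / d) :=
      Complex.log_ofReal_mul ha0 hedne
    have hde : d / e = (e / d)⁻¹ := (inv_div e d).symm
    have hloginv : Complex.log (d / e) = - Complex.log (e / d) := by
      rw [hde]
      exact Complex.log_inv _ (Complex.slitPlane_arg_ne_pi hed_slit)
    rw [Complex.cpow_def_of_ne_zero hane, Complex.cpow_def_of_ne_zero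
      (mul_ne_zero hane hedne), Complex.cpow_def_of_ne_zero (div_ne_zero hdne hene),
      hlogmul, hloginv, ← Complex.exp_add, Complex.ofReal_log ha0.le]
    congr 1
    ring
  have hsum := (aux_binomial (α : ℂ) hx).mul_left (((a : ℝ) : ℂ) ^ (α : ℂ))
  rw [hval] at hsum
  have hcast : ∀ k : ℕ, ((a : ℝ) : ℂ) ^ (α : ℂ) *
      (((∏ j ∈ Finset.range k, ((α : ℂ) + j)) / (Nat.factorial k : ℂ)) * x ^ k)
      = ((negBinomCoeff α k * a ^ α * (1 - a) ^ k : ℝ) : ℂ) * ((β : ℂ) / d) ^ k := by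
    intro k
    rw [hxdef, mul_pow, negBinomCoeff]
    push_cast [Complex.ofReal_cpow ha0.le]
    ring
  have hfun : (fun k : ℕ => ((a : ℝ) : ℂ) ^ (α : ℂ) *
      (((∏ j ∈ Finset.range k, ((α : ℂ) + j)) / (Nat.factorial k : ℂ)) * x ^ k))
      = fun k : ℕ => ((negBinomCoeff α k * a ^ α * (1 - a) ^ k : ℝ) : ℂ) *
        ((β : ℂ) / d) ^ k := funext hcast
  exact hfun ▸ hsum
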